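/- For x any one of the three elements ξ, η, ξη of Λ, the element 1−x is a non-zero-divisor of Λ: if f ∈ Λ satisfies f·(1−x) = 0, then f = 0. Equivalently, the cyclic Λ-module Λ(1−x) is free. (First part of the lemma in Section 3.4 of the paper.) -/

import Mathlib

namespace adelicHGF

/-- `Δ_N`: the multiplicative group `(ℤ/Nℤ) × (ℤ/Nℤ)`. -/
abbrev Delta (N : ℕ) : Type := Multiplicative (ZMod N × ZMod N)

/-- The group ring `(ℤ/nℤ)[Δ_N]`. -/
abbrev GR (N n : ℕ) : Type := MonoidAlgebra (ZMod n) (Delta N)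

/-- The reduction map `Δ_M → Δ_N` for `N ∣ M`. -/
def deltaMap {M N : ℕ} (h : N ∣ M) : Delta M →* Delta N :=
  AddMonoidHom.toMultiplicative
    (((ZMod.castHom h (ZMod N)).toAddMonoidHom).prodMap
      ((ZMod.castHom h (ZMod N)).toAddMonoidHom))

/-- The transition ring homomorphism `(ℤ/mℤ)[Δ_M] → (ℤ/nℤ)[Δ_N]` for `N ∣ M` and `n ∣ m`,
induced by the reduction maps `Δ_M → Δ_N` and `ℤ/mℤ → ℤ/nℤ`. -/
noncomputable def transGR {N M n m : ℕ} (hNM : N ∣ M) (hnm : n ∣ m) : GR M m →+* GR N n :=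
  MonoidAlgebra.liftNCRingHom
    ((MonoidAlgebra.singleOneRingHom).comp (ZMod.castHom hnm (ZMod n)))
    ((MonoidAlgebra.of (ZMod n) (Delta N)).comp (deltaMap hNM))
    (fun _ _ => Commute.all _ _)

lemma transGR_of {N M n m : ℕ} (hNM : N ∣ M) (hnm : n ∣ m) (g : Delta M) :
    transGR hNM hnm (MonoidAlgebra.of (ZMod m) (Delta M) g) =
      MonoidAlgebra.of (ZMod n) (Delta N) (deltaMap hNM g) := by
  simp [transGR, MonoidAlgebra.liftNCRingHom, ZMod.cast_one hnm]

/-- `Λ = Ẑ[[Δ_∞]]`, realized as the subring of `∏_{(N,n)} (ℤ/nℤ)[Δ_N]` consisting of families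
compatible with the transition maps. -/
noncomputable def Lambda : Subring (∀ p : ℕ+ × ℕ+, GR p.1 p.2) where
  carrier := {f | ∀ (N M n m : ℕ+) (hNM : (N : ℕ) ∣ (M : ℕ)) (hnm : (n : ℕ) ∣ (m : ℕ)),
    transGR hNM hnm (f (M, m)) = f (N, n)}
  mul_mem' := by
    intro f g hf hg N M n m hNM hnm
    simp only [Pi.mul_apply, map_mul, hf N M n m hNM hnm, hg N M n m hNM hnm]
  one_mem' := by
    intro N M n m hNM hnm
    simp only [Pi.one_apply, map_one]
  add_mem' := by
    intro f g hf hg N M n m hNM hnm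
    simp only [Pi.add_apply, map_add, hf N M n m hNM hnm, hg N M n m hNM hnm]
  zero_mem' := by
    intro N M n m hNM hnm
    simp only [Pi.zero_apply, map_zero]
  neg_mem' := by
    intro f hf N M n m hNM hnm
    simp only [Pi.neg_apply, map_neg, hf N M n m hNM hnm]

lemma deltaMap_ofAdd {M N : ℕ} (h : N ∣ M) (p : ZMod M × ZMod M) :
    deltaMap h (Multiplicative.ofAdd p) =
      Multiplicative.ofAdd (ZMod.castHom h (ZMod N) p.1, ZMod.castHom h (ZMod N) p.2) := rfl

/-- The element `ξ = (ξ_N)_N` of `Λ`. -/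
noncomputable def xiL : Lambda :=
  ⟨fun p => MonoidAlgebra.of (ZMod p.2) (Delta p.1)
      (Multiplicative.ofAdd ((1 : ZMod p.1), (0 : ZMod p.1))), by
    intro N M n m hNM hnm
    rw [transGR_of, deltaMap_ofAdd]
    simp [ZMod.cast_one hNM]⟩

/-- The element `η = (η_N)_N` of `Λ`. -/
noncomputable def etaL : Lambda :=
  ⟨fun p => MonoidAlgebra.of (ZMod p.2) (Delta p.1)
      (Multiplicative.ofAdd ((0 : ZMod p.1), (1 : ZMod p.1))), by
    intro N M n m hNM hnm
    rw [transGR_of, deltaMap_ofAdd]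
    simp [ZMod.cast_one hNM]⟩

/-- If `h` in a group algebra over a finite commutative group is invariant under
(right) multiplication by `g`, then `h` is a multiple of the norm element of `⟨g⟩`. -/
lemma exists_factor {G : Type*} [CommGroup G] [Fintype G] {R : Type*} [CommRing R]
    (g : G) (h : MonoidAlgebra R G) (hh : h * MonoidAlgebra.of R G g = h) :
    ∃ u : MonoidAlgebra R G,
      h = (∑ k ∈ Finset.range (orderOf g), (MonoidAlgebra.of R G g) ^ k) * u := by
  classical
  have hpow : ∀ k : ℕ, h * (MonoidAlgebra.of R G g) ^ k = h := by
    intro k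
    induction k with
    | zero => simp
    | succ k ih => rw [pow_succ, ← mul_assoc, ih, hh]
  have hinv : ∀ (k : ℕ) (x : G), h.coeff (g ^ k * x) = h.coeff x := by
    intro k x
    conv_lhs => rw [← hpow k, ← map_pow, MonoidAlgebra.of_apply,
      MonoidAlgebra.mul_single_apply]
    rw [mul_comm (g ^ k) x, mul_inv_cancel_right, mul_one]
  set Q := G ⧸ Subgroup.zpowers g with hQ
  refine ⟨∑ q : Q, MonoidAlgebra.single q.out (h.coeff q.out), ?_⟩
  rw [Finset.sum_mul_sum]
  have hsingle : ∀ (k : ℕ) (q : Q),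
      (MonoidAlgebra.of R G g) ^ k * MonoidAlgebra.single q.out (h.coeff q.out)
        = MonoidAlgebra.single (g ^ k * q.out) (h.coeff (g ^ k * q.out)) := by
    intro k q
    rw [← map_pow, MonoidAlgebra.of_apply, MonoidAlgebra.single_mul_single, one_mul,
      hinv k q.out]
  calc h = ∑ x ∈ (h : MonoidAlgebra R G).coeff.support, MonoidAlgebra.single x (h.coeff x) :=
        (MonoidAlgebra.sum_coeff_single h).symm
    _ = ∑ x : G, MonoidAlgebra.single x (h.coeff x) := by
        refine Finset.sum_subset (Finset.subset_univ _) (fun x _ hx => ?_)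
        rw [Finsupp.notMem_support_iff.mp hx]
        simp
    _ = ∑ k ∈ Finset.range (orderOf g), ∑ q : Q,
          (MonoidAlgebra.of R G g) ^ k * MonoidAlgebra.single q.out (h.coeff q.out) := by
        simp only [hsingle]
        rw [← Finset.sum_product']
        refine (Finset.sum_bij (fun (p : ℕ × Q) _ => g ^ p.1 * p.2.out) ?_ ?_ ?_ ?_).symm
        · intro a ha; exact Finset.mem_univ _
        · intro p₁ h₁ p₂ h₂ he
          have hq : p₁.2 = p₂.2 := by
            have h2 := congrArg (QuotientGroup.mk (s := Subgroup.zpowers g)) he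
            simpa [QuotientGroup.mk_mul, QuotientGroup.mk_pow,
              (QuotientGroup.eq_one_iff g).mpr (Subgroup.mem_zpowers g),
              QuotientGroup.out_eq'] using h2
          rw [hq] at he
          have hk : p₁.1 = p₂.1 := by
            have h3 := mul_right_cancel he
            exact pow_injOn_Iio_orderOf
              (by simpa using (Finset.mem_product.mp h₁).1)
              (by simpa using (Finset.mem_product.mp h₂).1) h3
          exact Prod.ext hk hq
        · intro b _
          set q : Q := QuotientGroup.mk b with hq
          have hmem : q.out⁻¹ * b ∈ Subgroup.zpowers g :=
            QuotientGroup.eq.mp (by rw [QuotientGroup.out_eq'])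
          obtain ⟨j, hj⟩ := (mem_powers_iff_mem_zpowers).mpr hmem
          dsimp only at hj
          refine ⟨(j % orderOf g, q), ?_, ?_⟩
          · simp [Finset.mem_product, Nat.mod_lt _ (orderOf_pos g)]
          · show g ^ (j % orderOf g) * q.out = b
            rw [pow_mod_orderOf, hj, mul_comm, mul_inv_cancel_left]
        · intro p hp
          rw [hinv]

/-- Geometric-type sum: if `z ^ N = 1` then `∑_{k < N*n} z^k = n • ∑_{k < N} z^k`. -/
lemma sum_pow_range_mul {R : Type*} [CommRing R] (z : R) (N : ℕ) (hz : z ^ N = 1) :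
    ∀ n : ℕ, ∑ k ∈ Finset.range (N * n), z ^ k = n • ∑ k ∈ Finset.range N, z ^ k := by
  intro n
  induction n with
  | zero => simp
  | succ n ih =>
    rw [Nat.mul_succ, Finset.sum_range_add, ih, succ_nsmul]
    congr 1
    refine Finset.sum_congr rfl fun k _ => ?_
    rw [pow_add, pow_mul, hz, one_pow, one_mul]

/-- The key computation: if `h ∈ (ℤ/nℤ)[Δ_{Nn}]` is invariant under multiplication by
`ofAdd (c, d)` with `c = 1` or `d = 1`, then its image in `(ℤ/nℤ)[Δ_N]` vanishes. -/
lemma transGR_eq_zero (N n : ℕ+) (hNM : ((N : ℕ+) : ℕ) ∣ ((N * n : ℕ+) : ℕ))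
    (c d : ZMod ((N * n : ℕ+) : ℕ)) (hcd : c = 1 ∨ d = 1)
    (h : GR ((N * n : ℕ+) : ℕ) n)
    (hh : h * MonoidAlgebra.of (ZMod (n : ℕ)) (Delta ((N * n : ℕ+) : ℕ))
        (Multiplicative.ofAdd (c, d)) = h) :
    transGR hNM dvd_rfl h = 0 := by
  haveI : NeZero ((N * n : ℕ+) : ℕ) := ⟨(N * n : ℕ+).ne_zero⟩
  haveI : NeZero ((N : ℕ+) : ℕ) := ⟨N.ne_zero⟩
  obtain ⟨u, hu⟩ := exists_factor (Multiplicative.ofAdd (c, d)) h hh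
  -- the order of `ofAdd (c, d)` is `N * n`
  have hord : orderOf (Multiplicative.ofAdd (c, d)) = ((N * n : ℕ+) : ℕ) := by
    rw [orderOf_ofAdd_eq_addOrderOf, Prod.addOrderOf]
    refine Nat.dvd_antisymm (Nat.lcm_dvd ?_ ?_) ?_
    · simpa [Nat.card_zmod] using addOrderOf_dvd_natCard c
    · simpa [Nat.card_zmod] using addOrderOf_dvd_natCard d
    · rcases hcd with rfl | rfl
      · have : addOrderOf ((1 : ZMod ((N * n : ℕ+) : ℕ)), d).1 = ((N * n : ℕ+) : ℕ) :=
          ZMod.addOrderOf_one _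
        rw [this]; exact Nat.dvd_lcm_left _ _
      · have : addOrderOf ((c, (1 : ZMod ((N * n : ℕ+) : ℕ)))).2 = ((N * n : ℕ+) : ℕ) :=
          ZMod.addOrderOf_one _
        rw [this]; exact Nat.dvd_lcm_right _ _
  rw [hu, map_mul, map_sum]
  have htrans : ∀ k : ℕ, transGR hNM dvd_rfl
        ((MonoidAlgebra.of (ZMod (n : ℕ)) (Delta ((N * n : ℕ+) : ℕ))
          (Multiplicative.ofAdd (c, d))) ^ k)
      = (MonoidAlgebra.of (ZMod (n : ℕ)) (Delta ((N : ℕ+) : ℕ))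
          (deltaMap hNM (Multiplicative.ofAdd (c, d)))) ^ k := by
    intro k
    rw [map_pow, transGR_of]
  simp only [htrans]
  -- the image of `ofAdd (c, d)` has order dividing `N`
  have hg1 : (deltaMap hNM (Multiplicative.ofAdd (c, d))) ^ ((N : ℕ+) : ℕ) = 1 := by
    apply orderOf_dvd_iff_pow_eq_one.mp
    rw [deltaMap_ofAdd, orderOf_ofAdd_eq_addOrderOf, Prod.addOrderOf]
    refine Nat.lcm_dvd ?_ ?_
    · simpa [ZMod.card] using addOrderOf_dvd_card (x := ZMod.castHom hNM (ZMod (N : ℕ+)) c)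
    · simpa [ZMod.card] using addOrderOf_dvd_card (x := ZMod.castHom hNM (ZMod (N : ℕ+)) d)
  have hzN : (MonoidAlgebra.of (ZMod (n : ℕ)) (Delta ((N : ℕ+) : ℕ))
      (deltaMap hNM (Multiplicative.ofAdd (c, d)))) ^ ((N : ℕ+) : ℕ) = 1 := by
    rw [← map_pow, hg1, map_one]
  have hM : ((N * n : ℕ+) : ℕ) = ((N : ℕ+) : ℕ) * ((n : ℕ+) : ℕ) := PNat.mul_coe N n
  rw [hord,
    show Finset.range ((N * n : ℕ+) : ℕ) = Finset.range (((N : ℕ+) : ℕ) * ((n : ℕ+) : ℕ)) from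
      congrArg _ hM,
    sum_pow_range_mul _ _ hzN, ← Nat.cast_smul_eq_nsmul (ZMod (n : ℕ)),
    ZMod.natCast_self, zero_smul, zero_mul]

/-- **First part of the lemma in Section 3.4**: for `x` any one of `ξ`, `η`, `ξη` in
`Λ = Ẑ[[Δ_∞]]`, the element `1 - x` is a non-zero-divisor of `Λ`: if `f · (1 - x) = 0` then
`f = 0`.  (Equivalently, the cyclic `Λ`-module `Λ(1-x)` is free.) -/
theorem one_sub_x_nonZeroDivisor (x : Lambda) (hx : x = xiL ∨ x = etaL ∨ x = xiL * etaL)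
    (f : Lambda) (hf : f * (1 - x) = 0) : f = 0 := by
  have hfx : f = f * x := by
    rw [mul_one_sub, sub_eq_zero] at hf
    exact hf
  have hcompat : ∀ (N M n m : ℕ+) (hNM : (N : ℕ) ∣ (M : ℕ)) (hnm : (n : ℕ) ∣ (m : ℕ)),
      transGR hNM hnm ((f : ∀ p : ℕ+ × ℕ+, GR p.1 p.2) (M, m))
        = (f : ∀ p : ℕ+ × ℕ+, GR p.1 p.2) (N, n) := f.2
  have hcomp : ∀ p : ℕ+ × ℕ+,
      (f : ∀ p : ℕ+ × ℕ+, GR p.1 p.2) p * (x : ∀ p : ℕ+ × ℕ+, GR p.1 p.2) p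
        = (f : ∀ p : ℕ+ × ℕ+, GR p.1 p.2) p := by
    intro p
    conv_rhs => rw [hfx]
    rfl
  refine Subtype.ext (funext fun p => ?_)
  obtain ⟨N, n⟩ := p
  show (f : ∀ p : ℕ+ × ℕ+, GR p.1 p.2) (N, n) = 0
  have hdvd : ((N : ℕ+) : ℕ) ∣ ((N * n : ℕ+) : ℕ) := ⟨(n : ℕ), (PNat.mul_coe N n)⟩
  rw [← hcompat N (N * n) n n hdvd dvd_rfl]
  rcases hx with rfl | rfl | rfl
  · exact transGR_eq_zero N n hdvd 1 0 (Or.inl rfl) _ (hcomp (N * n, n))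
  · exact transGR_eq_zero N n hdvd 0 1 (Or.inr rfl) _ (hcomp (N * n, n))
  · refine transGR_eq_zero N n hdvd 1 1 (Or.inl rfl) _ ?_
    have hval : ((xiL * etaL : Lambda) : ∀ p : ℕ+ × ℕ+, GR p.1 p.2) (N * n, n)
        = MonoidAlgebra.of (ZMod (n : ℕ)) (Delta ((N * n : ℕ+) : ℕ))
            (Multiplicative.ofAdd ((1 : ZMod ((N * n : ℕ+) : ℕ)), (1 : ZMod ((N * n : ℕ+) : ℕ)))) := by
      show MonoidAlgebra.of (ZMod (n : ℕ)) (Delta ((N * n : ℕ+) : ℕ))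
            (Multiplicative.ofAdd ((1 : ZMod ((N * n : ℕ+) : ℕ)), (0 : ZMod ((N * n : ℕ+) : ℕ))))
          * MonoidAlgebra.of (ZMod (n : ℕ)) (Delta ((N * n : ℕ+) : ℕ))
            (Multiplicative.ofAdd ((0 : ZMod ((N * n : ℕ+) : ℕ)), (1 : ZMod ((N * n : ℕ+) : ℕ)))) = _
      rw [← map_mul, ← ofAdd_add, Prod.mk_add_mk, add_zero, zero_add]
    rw [← hval]
    exact hcomp (N * n, n)

end adelicHGF
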